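/- The derivative of clog is monotone in the sense that |clog'(x)| is bounded by L₉·log(x)/x² + L₁₀ for suitable constants: there exist a negative constant L₉ and a positive constant L₁₀ suchที that |clog'(x)| ≤ L₉·log(x)/x² + L₁₀ for all x > 0. -/

import Mathlib

noncomputable def clog (x₀ x : ℝ) : ℝ :=
  if 0 < x ∧ x ≤ x₀ then -((x - x₀)^2 / x) * Real.log (x / x₀) else 0
-- derivative on (0, x₀)
lemma deriv_clog_lt (x₀ x : ℝ) (hx : 0 < x) (hxx : x < x₀) :
    deriv (clog x₀) x = (x₀^2 - x^2)/x^2 * Real.log (x/x₀) - (x-x₀)^2/x^2 := by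
  have hx0 : (0:ℝ) < x₀ := hx.trans hxx
  have heq : clog x₀ =ᶠ[nhds x] fun y => -((y - x₀)^2 / y) * Real.log (y / x₀) := by
    filter_upwards [Ioo_mem_nhds hx hxx] with y hy
    simp [clog, hy.1, hy.2.le]
  have h1 : HasDerivAt (fun y : ℝ => (y - x₀)^2 / y)
      ((2*(x-x₀)*x - (x-x₀)^2*1)/x^2) x := by
    have := (((hasDerivAt_id' x).sub_const x₀).fun_pow 2).fun_div (hasDerivAt_id' x) hx.ne'
    simpa using this
  have h2 : HasDerivAt (fun y : ℝ => Real.log (y / x₀)) (1/x) x := by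
    have := (Real.hasDerivAt_log (div_ne_zero hx.ne' hx0.ne')).comp x
      ((hasDerivAt_id x).div_const x₀)
    convert this using 1
    · rfl
    · rfl
    · rfl
    field_simp
  have h3 : HasDerivAt (fun y => -((y - x₀)^2 / y) * Real.log (y / x₀))
      (-((2*(x-x₀)*x - (x-x₀)^2*1)/x^2) * Real.log (x/x₀) + (-((x - x₀)^2 / x)) * (1/x)) x :=
    h1.neg.mul h2
  rw [heq.deriv_eq, h3.deriv]
  field_simp
  ring

lemma deriv_clog_eq (x₀ : ℝ) (hx₀ : 0 < x₀) : deriv (clog x₀) x₀ = 0 := by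
  have h : HasDerivAt (clog x₀) 0 x₀ := by
    rw [hasDerivAt_iff_tendsto_slope]
    have hb : ∀ᶠ y in nhdsWithin x₀ {x₀}ᶜ,
        ‖slope (clog x₀) x₀ y‖ ≤ (2 * Real.log 2 / x₀) * |y - x₀| := by
      have hmem : Set.Ioo (x₀/2) (2*x₀) ∈ nhdsWithin x₀ {x₀}ᶜ := by
        apply nhdsWithin_le_nhds
        exact Ioo_mem_nhds (by linarith) (by linarith)
      filter_upwards [hmem, self_mem_nhdsWithin] with y hy hy'
      have hyne : y ≠ x₀ := hy'
      have hc0 : clog x₀ x₀ = 0 := by simp [clog, hx₀]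
      rw [slope_def_field, hc0]
      have hy1 : x₀/2 < y := hy.1
      have hy0 : 0 < y := by linarith
      have habs : 0 < |y - x₀| := abs_pos.mpr (sub_ne_zero.mpr hyne)
      rcases le_or_gt y x₀ with hle | hgt
      · have hcl : clog x₀ y = -((y - x₀)^2 / y) * Real.log (y / x₀) := by
          simp [clog, hy0, hle]
        rw [hcl]
        have hlog : |Real.log (y / x₀)| ≤ Real.log 2 := by
          rw [abs_le]
          constructor
          · rw [← Real.log_inv, Real.log_le_log_iff (by positivity) (by positivity)]
            rw [le_div_iff₀ hx₀]
            linarith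
          · rw [Real.log_le_log_iff (by positivity) (by positivity)]
            rw [div_le_iff₀ hx₀]
            nlinarith
        have heq : ‖(-((y - x₀)^2 / y) * Real.log (y / x₀) - 0) / (y - x₀)‖
            = (y - x₀)^2 / y * |Real.log (y / x₀)| / |y - x₀| := by
          rw [Real.norm_eq_abs, abs_div, sub_zero, abs_mul, abs_neg, abs_div,
            abs_of_nonneg (sq_nonneg _), abs_of_pos hy0]
        rw [heq]
        have h2y : 1/y ≤ 2/x₀ := by
          rw [div_le_div_iff₀ hy0 hx₀]; linarith
        have hlogpos : (0:ℝ) ≤ Real.log 2 := Real.log_nonneg (by norm_num)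
        have hsq : (y - x₀)^2 = |y - x₀|^2 := (sq_abs _).symm
        rw [div_le_iff₀ habs, hsq]
        have hyy : |y - x₀|^2 / y ≤ |y - x₀|^2 * (2/x₀) := by
          rw [div_le_iff₀ hy0]
          have hx2 : 1 ≤ y * (2/x₀) := by
            rw [mul_div_assoc', le_div_iff₀ hx₀]
            have := (div_le_div_iff₀ hy0 hx₀).mp h2y
            linarith
          nlinarith [sq_nonneg (y - x₀), sq_nonneg (|y - x₀|)]
        calc |y - x₀|^2 / y * |Real.log (y / x₀)|
            ≤ |y - x₀|^2 * (2/x₀) * Real.log 2 := by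
              apply mul_le_mul hyy hlog (abs_nonneg _)
              positivity
          _ = 2 * Real.log 2 / x₀ * |y - x₀| * |y - x₀| := by ring
          _ ≤ _ := by rw [mul_assoc]
      · have hcl : clog x₀ y = 0 := by simp [clog, not_le.mpr hgt]
        rw [hcl]
        simp
        positivity
    have hlim : Filter.Tendsto (fun y => (2 * Real.log 2 / x₀) * |y - x₀|)
        (nhdsWithin x₀ {x₀}ᶜ) (nhds 0) := by
      have h1 : Filter.Tendsto (fun y : ℝ => (2 * Real.log 2 / x₀) * |y - x₀|)
          (nhds x₀) (nhds 0) := by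
        have hc : Continuous fun y : ℝ => (2 * Real.log 2 / x₀) * |y - x₀| :=
          continuous_const.mul (continuous_id.sub continuous_const).abs
        have := hc.tendsto x₀
        simpa using this
      exact h1.mono_left nhdsWithin_le_nhds
    exact squeeze_zero_norm' hb hlim
  exact h.deriv

-- uniform helper
lemma aux1 (x : ℝ) (hx : 0 < x) :
    1/x^2 ≤ (1/Real.log 2) * (max 0 (-Real.log x) / x^2) + 4 := by
  have hlog2 : (0:ℝ) < Real.log 2 := Real.log_pos (by norm_num)
  rcases le_or_gt x (1/2) with h | h
  · have hlx : Real.log 2 ≤ -Real.log x := by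
      rw [← Real.log_inv]
      apply Real.log_le_log (by norm_num)
      rw [le_inv_comm₀ (by norm_num) hx]
      linarith
    have hmax : max 0 (-Real.log x) = -Real.log x := max_eq_right (by linarith)
    rw [hmax]
    have h1 : 1 ≤ (1/Real.log 2) * (-Real.log x) := by
      rw [one_div, inv_mul_eq_div, le_div_iff₀ hlog2]
      linarith
    have key : 1/x^2 ≤ (1/Real.log 2) * (-Real.log x / x^2) := by
      calc 1/x^2 = 1 * (1/x^2) := (one_mul _).symm
        _ ≤ ((1/Real.log 2) * (-Real.log x)) * (1/x^2) :=
            mul_le_mul_of_nonneg_right h1 (by positivity)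
        _ = _ := by ring
    linarith
  · have h4 : 1/x^2 < 4 := by
      rw [div_lt_iff₀ (by positivity)]
      nlinarith
    have hm : 0 ≤ (1/Real.log 2) * (max 0 (-Real.log x) / x^2) := by positivity
    linarith
lemma deriv_clog_gt (x₀ x : ℝ) (hxx : x₀ < x) : deriv (clog x₀) x = 0 := by
  have heq : clog x₀ =ᶠ[nhds x] fun _ => (0:ℝ) := by
    filter_upwards [Ioi_mem_nhds hxx] with y hy
    simp [clog, not_le.mpr (Set.mem_Ioi.mp hy)]
  rw [heq.deriv_eq]
  simp

theorem clog_deriv_bound (x₀ : ℝ) (hx₀ : 0 < x₀) :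
    ∃ L₉ : ℝ, L₉ < 0 ∧ ∃ L₁₀ : ℝ, 0 < L₁₀ ∧
      ∀ x : ℝ, 0 < x → |deriv (clog x₀) x| ≤ L₉ * Real.log x / x^2 + L₁₀ := by
  have hlog2 : (0:ℝ) < Real.log 2 := Real.log_pos (by norm_num)
  set K := x₀^2 * (|Real.log x₀| + 1) with hK
  have hKpos : 0 < K := by positivity
  set A := x₀^2 + K / Real.log 2 with hA
  have hApos : 0 < A := by positivity
  clear_value K A
  refine ⟨-A, by linarith, 4*K + 1 + A, by linarith, ?_⟩
  intro x hx
  have hx2 : (0:ℝ) < x^2 := by positivity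
  set m := max 0 (-Real.log x) with hm
  have hm0 : 0 ≤ m := le_max_left _ _
  have key : |deriv (clog x₀) x| ≤ A * m / x^2 + (4*K + 1) := by
    rcases lt_trichotomy x x₀ with hlt | heqx | hgt
    · rw [deriv_clog_lt x₀ x hx hlt]
      set L := Real.log (x / x₀) with hL
      have hLle : L ≤ 0 :=
        Real.log_nonpos (by positivity) ((div_le_one hx₀).mpr hlt.le)
      have hLeq : L = Real.log x - Real.log x₀ := Real.log_div hx.ne' hx₀.ne'
      have hsq : 0 ≤ x₀^2 - x^2 := by nlinarith
      have hd : (x₀^2 - x^2)/x^2 * L - (x-x₀)^2/x^2 ≤ 0 := by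
        have h1 : (x₀^2 - x^2)/x^2 * L ≤ 0 :=
          mul_nonpos_of_nonneg_of_nonpos (div_nonneg hsq hx2.le) hLle
        have h2 : 0 ≤ (x-x₀)^2/x^2 := by positivity
        linarith
      rw [abs_of_nonpos hd]
      have hnum : (x₀^2 - x^2) * (-L) + (x-x₀)^2 ≤ x₀^2 * m + K := by
        have ha : Real.log x₀ ≤ |Real.log x₀| := le_abs_self _
        have hb : -Real.log x ≤ m := le_max_right _ _
        have hc : 0 ≤ -L := by linarith
        have hd2 : -L ≤ |Real.log x₀| + m := by
          rw [hLeq]; linarith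
        have he : (x₀^2 - x^2) * (-L) ≤ x₀^2 * (|Real.log x₀| + m) := by
          apply mul_le_mul (by nlinarith) hd2 hc (by positivity)
        have hf : (x-x₀)^2 ≤ x₀^2 := by nlinarith
        rw [hK]
        nlinarith
      have hdivs : -((x₀^2 - x^2)/x^2 * L - (x-x₀)^2/x^2)
          = ((x₀^2 - x^2) * (-L) + (x-x₀)^2) / x^2 := by
        field_simp
        ring
      rw [hdivs]
      calc ((x₀^2 - x^2) * (-L) + (x-x₀)^2) / x^2
          ≤ (x₀^2 * m + K) / x^2 := by gcongr
        _ = x₀^2 * m / x^2 + K * (1/x^2) := by ring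
        _ ≤ x₀^2 * m / x^2 + K * ((1/Real.log 2) * (m / x^2) + 4) := by
            have := aux1 x hx
            rw [← hm] at this
            nlinarith
        _ = A * m / x^2 + 4*K := by rw [hA]; field_simp; ring
        _ ≤ A * m / x^2 + (4*K + 1) := by linarith
    · have hdz : deriv (clog x₀) x = 0 := by rw [heqx]; exact deriv_clog_eq x₀ hx₀
      have h0 : 0 ≤ A * m / x^2 := div_nonneg (mul_nonneg hApos.le hm0) hx2.le
      rw [hdz, abs_zero]
      linarith
    · rw [deriv_clog_gt x₀ x hgt]
      have h0 : 0 ≤ A * m / x^2 := div_nonneg (mul_nonneg hApos.le hm0) hx2.le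
      rw [abs_zero]
      linarith
  have step : A * m / x^2 ≤ (-A) * Real.log x / x^2 + A := by
    rcases le_or_gt (Real.log x) 0 with h | h
    · have hme : m = -Real.log x := max_eq_right (by linarith)
      have e : (-A) * Real.log x / x^2 = A * (-Real.log x) / x^2 := by ring
      rw [hme, e]
      linarith
    · have hme : m = 0 := max_eq_left (by linarith)
      have hx1 : 1 < x := by
        by_contra h'
        push_neg at h'
        exact absurd (Real.log_nonpos hx.le h') (not_le.mpr h)
      have hlogle : Real.log x ≤ x^2 := by
        nlinarith [Real.log_le_sub_one_of_pos hx]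
      have h2 : A * Real.log x / x^2 ≤ A := by
        rw [div_le_iff₀ hx2]
        nlinarith
      have e : (-A) * Real.log x / x^2 = -(A * Real.log x / x^2) := by ring
      rw [hme, e]
      simp only [mul_zero, zero_div]
      linarith
  calc |deriv (clog x₀) x| ≤ A * m / x^2 + (4*K + 1) := key
    _ ≤ (-A) * Real.log x / x^2 + A + (4*K + 1) := by linarith
    _ = -A * Real.log x / x^2 + (4*K + 1 + A) := by ring
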